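/- Let h ≥ 4 and let J_h be the instance on k = 2 routers consisting of: h packets of length 1 released at time 0 at router 1; h packets of length 2 released at time 2 at router 1; and 2h packets of length 1 released at time h + 3 at router 2. Then there exists a feasible schedule for J_h whose maximum flow time is at most 2h; consequently, Opt(J_h) ≤ 2h. -/
import Mathlib


/-!
# Packet forwarding on a line network

There are `k` active routers `1, …, k`; router `i` forwards packets to router `i+1`.
An instance is a finite collection of packets; packet `p` has a release time `rel p : ℕ`,
a start router `start p ∈ {1, …, k}` and a length `len p ≥ 1` with
`start p + len p − 1 ≤ k`; `p` must be forwarded by routers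
`start p, start p + 1, …, start p + len p − 1` in this order.
-/

/-- An instance of online packet forwarding on a line network with `k` active routers.
Packets are indexed by `Fin n`. -/
structure PInstance (k : ℕ) where
  n : ℕ
  rel : Fin n → ℕ
  start : Fin n → ℕ
  len : Fin n → ℕ

namespace PInstance

variable {k : ℕ}

/-- The instance is well-formed: start routers are at least `1`, lengths are at least `1`,
and every packet fits on the line: `start p + len p − 1 ≤ k`. -/
def Valid (I : PInstance k) : Prop :=
  ∀ p, 1 ≤ I.start p ∧ 1 ≤ I.len p ∧ I.start p + I.len p ≤ k + 1

/-- All packets of the instance have length `1` or `2`. -/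
def Short (I : PInstance k) : Prop :=
  ∀ p, I.len p = 1 ∨ I.len p = 2

/-- A schedule assigns to each packet `p` and each hop index `j < len p` (corresponding to
router `start p + j`) the time step at which that router forwards `p`.  Values at
hop indices `j ≥ len p` are irrelevant. -/
abbrev Sched (I : PInstance k) := Fin I.n → ℕ → ℕ

/-- `arr I S p j` is the time from which hop `j` of packet `p` is available:
packet `p` is available at its start router from time `rel p`, and a packet forwarded
at time `t` is available at the next router from time `t + 1`. -/
def arr (I : PInstance k) (S : Sched I) (p : Fin I.n) : ℕ → ℕ
  | 0 => I.rel p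
  | j + 1 => S p j + 1

/-- Feasibility of a schedule: every hop is forwarded no earlier than the time from which
it is available (this includes releases and the order of the hops), and each router
forwards at most one packet in each time step. -/
def Feasible (I : PInstance k) (S : Sched I) : Prop :=
  (∀ p j, j < I.len p → arr I S p j ≤ S p j) ∧
  (∀ p q jp jq, jp < I.len p → jq < I.len q →
    I.start p + jp = I.start q + jq → S p jp = S q jq → p = q)

/-- Completion time `C(p)`: one plus the time step in which the last router forwards `p`. -/
def comp (I : PInstance k) (S : Sched I) (p : Fin I.n) : ℕ :=
  S p (I.len p - 1) + 1

/-- Flow time of packet `p`: `C(p) − r(p)`. -/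
def flowTime (I : PInstance k) (S : Sched I) (p : Fin I.n) : ℕ :=
  comp I S p - I.rel p

/-- Cost of a schedule: the maximum flow time over all packets of the instance. -/
def cost (I : PInstance k) (S : Sched I) : ℕ :=
  Finset.univ.sup (flowTime I S)

/-- `Opt(I)`: the minimum cost over all feasible schedules. -/
noncomputable def opt (I : PInstance k) : ℕ :=
  sInf {c | ∃ S : Sched I, Feasible I S ∧ cost I S = c}

/-- Hop `j` of packet `p` is waiting (available but not yet forwarded) at time `t`. -/
def Waiting (I : PInstance k) (S : Sched I) (p : Fin I.n) (j t : ℕ) : Prop :=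
  j < I.len p ∧ arr I S p j ≤ t ∧ t ≤ S p j

/-- Remaining length `ℓ(p,t)`: the number of routers that still need to forward `p`
at time `t` (under schedule `S`). -/
noncomputable def remLen (I : PInstance k) (S : Sched I) (p : Fin I.n) (t : ℕ) : ℕ :=
  Set.ncard {j : ℕ | j < I.len p ∧ t ≤ S p j}

/-- Priority `π(p,t) = (t − r(p)) + ℓ(p,t)`. -/
noncomputable def prio (I : PInstance k) (S : Sched I) (p : Fin I.n) (t : ℕ) : ℕ :=
  (t - I.rel p) + remLen I S p t

/-- A schedule is zealous if, at every time step and every router at which some packet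
is available (waiting), it forwards a packet there. -/
def Zealous (I : PInstance k) (S : Sched I) : Prop :=
  ∀ t i, (∃ p j, Waiting I S p j t ∧ I.start p + j = i) →
    ∃ q jq, Waiting I S q jq t ∧ I.start q + jq = i ∧ S q jq = t

/-- `S` is a schedule that Greedy (with some tie-breaking rule) produces: it is feasible,
and in every time step, every router at which at least one packet is waiting forwards a
waiting packet of maximum priority among the packets waiting there. -/
def IsGreedy (I : PInstance k) (S : Sched I) : Prop :=
  Feasible I S ∧
  ∀ t i, (∃ p j, Waiting I S p j t ∧ I.start p + j = i) →
    ∃ q jq, Waiting I S q jq t ∧ I.start q + jq = i ∧ S q jq = t ∧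
      ∀ p j, Waiting I S p j t → I.start p + j = i → prio I S p t ≤ prio I S q t

/-- The number of packets released by time `t` that still need to be forwarded by
router `i` at time `t` under schedule `S`. -/
noncomputable def needs (I : PInstance k) (S : Sched I) (i t : ℕ) : ℕ :=
  Set.ncard {p : Fin I.n | I.rel p ≤ t ∧ ∃ j, j < I.len p ∧ I.start p + j = i ∧ t ≤ S p j}

end PInstance

/-- Build an instance from a list of packets, each given as a triple
(release time, start router, length). -/
def ofTriples (k : ℕ) (L : List (ℕ × ℕ × ℕ)) : PInstance k where
  n := L.length
  rel p := (L.get p).1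
  start p := (L.get p).2.1
  len p := (L.get p).2.2

/-- The instance `J_h` on `k = 2` routers: `h` packets of length `1` released at time `0`
at router `1`; `h` packets of length `2` released at time `2` at router `1`; and `2h`
packets of length `1` released at time `h + 3` at router `2`. -/
def Jh (h : ℕ) : PInstance 2 :=
  ofTriples 2 (List.replicate h (0, 1, 1) ++ List.replicate h (2, 1, 2)
    ++ List.replicate (2 * h) (h + 3, 2, 1))


private lemma Jh_n (h : ℕ) : (Jh h).n = 4 * h := by
  simp [Jh, ofTriples]; ring

private lemma Jh_data (h : ℕ) (p : Fin (Jh h).n) :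
    (p.val < h ∧ (Jh h).rel p = 0 ∧ (Jh h).start p = 1 ∧ (Jh h).len p = 1) ∨
    (h ≤ p.val ∧ p.val < 2 * h ∧ (Jh h).rel p = 2 ∧ (Jh h).start p = 1 ∧ (Jh h).len p = 2) ∨
    (2 * h ≤ p.val ∧ p.val < 4 * h ∧ (Jh h).rel p = h + 3 ∧ (Jh h).start p = 2 ∧
      (Jh h).len p = 1) := by
  have hv : p.val < 4 * h := by have := p.isLt; simpa [Jh_n] using this
  rcases lt_or_ge p.val h with h1 | h1
  · left
    refine ⟨h1, ?_, ?_, ?_⟩ <;>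
      simp [Jh, ofTriples, List.getElem_append, h1]
  · rcases lt_or_ge p.val (2 * h) with h2 | h2
    · right; left
      have h3 : p.val - h < h := by omega
      refine ⟨h1, h2, ?_, ?_, ?_⟩ <;>
        simp [Jh, ofTriples, List.getElem_append, Nat.not_lt.mpr h1, h3]
    · right; right
      have h3 : ¬ (p.val - h < h) := by omega
      refine ⟨h2, hv, ?_, ?_, ?_⟩ <;>
        simp [Jh, ofTriples, List.getElem_append, Nat.not_lt.mpr h1, h3]

/-- The explicit schedule for `J_h`. -/
def jhSched (h : ℕ) : PInstance.Sched (Jh h) := fun p j =>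
  if p.val < 2 then p.val
  else if p.val < h then p.val + h
  else if p.val < 2 * h then p.val - h + 2 + j
  else p.val - 2 * h + h + 3

/-- Let `h ≥ 4`.  Then there exists a feasible schedule for `J_h` whose
maximum flow time is at most `2h`; consequently, `Opt(J_h) ≤ 2h`. -/
theorem opt_Jh_upper (h : ℕ) (hh : 4 ≤ h) :
    (∃ S : PInstance.Sched (Jh h), (Jh h).Feasible S ∧ (Jh h).cost S ≤ 2 * h) ∧
    (Jh h).opt ≤ 2 * h := by
  set S := jhSched h with hS
  have hfeas : (Jh h).Feasible S := by
    constructor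
    · intro p j hj
      rcases Jh_data h p with ⟨hv, hr, hs, hl⟩ | ⟨hv1, hv2, hr, hs, hl⟩ |
        ⟨hv1, hv2, hr, hs, hl⟩ <;> rw [hl] at hj
      · have : j = 0 := by omega
        subst this
        simp only [PInstance.arr, hr, hS, jhSched]
        split_ifs <;> omega
      · interval_cases j <;>
          simp only [PInstance.arr, hr, hS, jhSched] <;> split_ifs <;> omega
      · have : j = 0 := by omega
        subst this
        simp only [PInstance.arr, hr, hS, jhSched]
        split_ifs <;> omega
    · intro p q jp jq hjp hjq hrt hts
      rcases Jh_data h p with ⟨hv, hr, hs, hl⟩ | ⟨hv1, hv2, hr, hs, hl⟩ |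
          ⟨hv1, hv2, hr, hs, hl⟩ <;>
        rcases Jh_data h q with ⟨hv', hr', hs', hl'⟩ | ⟨hv1', hv2', hr', hs', hl'⟩ |
          ⟨hv1', hv2', hr', hs', hl'⟩ <;>
        rw [hl] at hjp <;> rw [hl'] at hjq <;> rw [hs, hs'] at hrt <;>
        simp only [hS, jhSched] at hts <;> split_ifs at hts <;>
        exact Fin.ext (by omega)
  have hcost : (Jh h).cost S ≤ 2 * h := by
    apply Finset.sup_le
    intro p _
    rcases Jh_data h p with ⟨hv, hr, hs, hl⟩ | ⟨hv1, hv2, hr, hs, hl⟩ |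
        ⟨hv1, hv2, hr, hs, hl⟩ <;>
      simp only [PInstance.flowTime, PInstance.comp, hl, hr, hS, jhSched] <;>
      split_ifs <;> omega
  refine ⟨⟨S, hfeas, hcost⟩, ?_⟩
  exact le_trans (Nat.sInf_le ⟨S, hfeas, rfl⟩) hcost
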